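/- Let A ∈ ℝⁿˣⁿ be symmetric with nonnegative entries and at most one positive eigenvalue, and let v, w ∈ ℝⁿ with v having positive entries and vᵀAv > 0. Then (vᵀAv)·(wᵀAw) ≤ (vᵀAw)². -/

import Mathlib

open Matrix

theorem quadform_eq {n : ℕ} (A : Matrix (Fin n) (Fin n) ℝ) (hA : A.IsHermitian)
    (x z : Fin n → ℝ) :
    x ⬝ᵥ A.mulVec z = ∑ i, hA.eigenvalues i * (x ᵥ* (hA.eigenvectorUnitary : Matrix (Fin n) (Fin n) ℝ)) i * (z ᵥ* (hA.eigenvectorUnitary : Matrix (Fin n) (Fin n) ℝ)) i := by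
  conv_lhs => rw [hA.spectral_theorem, Unitary.conjStarAlgAut_apply]
  simp only [mulVec_mulVec, dotProduct_mulVec, vecMul_vecMul, RCLike.ofReal_real_eq_id,
    Function.comp_id, CompTriple.comp_eq]
  rw [← vecMul_vecMul, ← vecMul_vecMul, ← dotProduct_mulVec, star_eq_conjTranspose,
    conjTranspose_eq_transpose_of_trivial, mulVec_transpose]
  simp [dotProduct, vecMul_diagonal, mul_comm, mul_assoc, mul_left_comm]

/-- If `A` is a real symmetric `n × n` matrix with nonnegative entries and at most one
positive eigenvalue, and `v` has positive entries with `vᵀAv > 0`, then for every `w`,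
`(vᵀAv)(wᵀAw) ≤ (vᵀAw)²`. -/
theorem det_inequality_one_pos_eigenvalue
    {n : ℕ} (A : Matrix (Fin n) (Fin n) ℝ) (hA : A.IsHermitian)
    (hnonneg : ∀ i j, 0 ≤ A i j)
    (hone : Fintype.card {i : Fin n // 0 < hA.eigenvalues i} ≤ 1)
    (v w : Fin n → ℝ) (hv : ∀ i, 0 < v i) (hvAv : 0 < v ⬝ᵥ A.mulVec v) :
    (v ⬝ᵥ A.mulVec v) * (w ⬝ᵥ A.mulVec w) ≤ (v ⬝ᵥ A.mulVec w) ^ 2 := by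
  set U : Matrix (Fin n) (Fin n) ℝ := (hA.eigenvectorUnitary : Matrix (Fin n) (Fin n) ℝ) with hU
  set y : Fin n → ℝ := v ᵥ* U with hy
  set u : Fin n → ℝ := w ᵥ* U with hu
  set lam := hA.eigenvalues with hlam
  -- existence of a positive-eigenvalue coordinate with nonzero y
  have hqv : v ⬝ᵥ A.mulVec v = ∑ i, lam i * y i * y i := quadform_eq A hA v v
  have hex : ∃ p, 0 < lam p ∧ y p ≠ 0 := by
    by_contra h
    push_neg at h
    have : ∑ i, lam i * y i * y i ≤ 0 := by
      apply Finset.sum_nonpos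
      intro i _
      rcases le_or_gt (lam i) 0 with hl | hl
      · have : lam i * (y i * y i) ≤ 0 := mul_nonpos_of_nonpos_of_nonneg hl (mul_self_nonneg _)
        linarith [this, mul_assoc (lam i) (y i) (y i)]
      · have := h i hl
        simp [this]
    rw [hqv] at hvAv; linarith
  obtain ⟨p, hp, hyp⟩ := hex
  -- uniqueness of positive eigenvalue index
  have huniq : ∀ i, 0 < lam i → i = p := by
    intro i hi
    have hsub : Subsingleton {i : Fin n // 0 < hA.eigenvalues i} :=
      Fintype.card_le_one_iff_subsingleton.mp hone
    have := hsub.elim ⟨i, hi⟩ ⟨p, hp⟩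
    exact congrArg Subtype.val this
  set c := y p with hc
  set d := u p with hd
  -- the vector x = c•w - d•v has zero p-coordinate in the eigenbasis
  set x : Fin n → ℝ := c • w - d • v with hx
  have hxU : ∀ i, (x ᵥ* U) i = c * u i - d * y i := by
    intro i
    simp [hx, hy, hu, vecMul, dotProduct, Finset.sum_sub_distrib, sub_mul,
      Finset.mul_sum, mul_assoc]
  have hqx : x ⬝ᵥ A.mulVec x ≤ 0 := by
    rw [quadform_eq A hA x x]
    apply Finset.sum_nonpos
    intro i _
    rw [hxU i]
    rcases le_or_gt (lam i) 0 with hl | hl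
    · have : lam i * ((c * u i - d * y i) * (c * u i - d * y i)) ≤ 0 :=
        mul_nonpos_of_nonpos_of_nonneg hl (mul_self_nonneg _)
      nlinarith [this]
    · have : i = p := huniq i hl
      subst this
      have : c * u i - d * y i = 0 := by rw [hc, hd]; ring
      simp [this]
  -- symmetry
  have hsymm : w ⬝ᵥ A.mulVec v = v ⬝ᵥ A.mulVec w := by
    rw [quadform_eq A hA w v, quadform_eq A hA v w]
    apply Finset.sum_congr rfl
    intro i _; ring
  -- expand q(x)
  set qvv := v ⬝ᵥ A.mulVec v with hqvv
  set qvw := v ⬝ᵥ A.mulVec w with hqvw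
  set qww := w ⬝ᵥ A.mulVec w with hqww
  have hexp : x ⬝ᵥ A.mulVec x = c^2 * qww - 2*c*d*qvw + d^2*qvv := by
    simp only [hx, mulVec_sub, mulVec_smul, sub_dotProduct, dotProduct_sub,
      smul_dotProduct, dotProduct_smul, smul_eq_mul]
    rw [hsymm] at *
    ring
  have key : c^2 * qww - 2*c*d*qvw + d^2*qvv ≤ 0 := by rw [← hexp]; exact hqx
  have hc2 : 0 < c^2 := by positivity
  nlinarith [key, hvAv, hc2, sq_nonneg (d * qvv - c * qvw),
    mul_le_mul_of_nonneg_left key (le_of_lt hvAv)]
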